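/- (Self-similar Harnack) Let N ≥ 3 be an odd integer, σ ∈ (2/N², 1), and k ≥ 0 an integer. Suppose w : ℝ² → [0,∞) is C² with Δw = f, where |f| ≤ 1 everywhere, and for every x ∈ ℝ² and every i ∈ {0,...,k}, (1/N^{2i})∫_{Q_{N^i}(x)} |f| ≤ σ^i, where Q_r(x) is the axis-parallel square of side r centered at x. Then there is a universal constant C (independent of N, σ, k) such that for all x ∈ ℝ² and y ∈ Q_{N^k}(x), w(y) ≤ C(w(x) + N^{2k}σ^k ln N). -/

import Mathlib

open Real MeasureTheory Set

noncomputable def pdx (f : ℝ × ℝ → ℝ) (p : ℝ × ℝ) : ℝ := fderiv ℝ f p (1, 0)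
noncomputable def pdy (f : ℝ × ℝ → ℝ) (p : ℝ × ℝ) : ℝ := fderiv ℝ f p (0, 1)
noncomputable def lap (f : ℝ × ℝ → ℝ) (p : ℝ × ℝ) : ℝ :=
  pdx (pdx f) p + pdy (pdy f) p

/-- The axis-parallel square of side `r` centered at `x`. -/
def sqQ (r : ℝ) (x : ℝ × ℝ) : Set (ℝ × ℝ) :=
  Set.Icc (x.1 - r / 2) (x.1 + r / 2) ×ˢ Set.Icc (x.2 - r / 2) (x.2 + r / 2)

noncomputable def ed (θ : ℝ) : ℝ × ℝ := (Real.cos θ, Real.sin θ)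
noncomputable def ep (θ : ℝ) : ℝ × ℝ := (-Real.sin θ, Real.cos θ)
noncomputable def D2 (w : ℝ × ℝ → ℝ) (p u v : ℝ × ℝ) : ℝ := fderiv ℝ (fderiv ℝ w) p u v
def disc (z : ℝ × ℝ) (r : ℝ) : Set (ℝ × ℝ) := {p | (p.1 - z.1)^2 + (p.2 - z.2)^2 < r^2}

lemma continuous_ed : Continuous ed := by unfold ed; fun_prop
lemma continuous_ep : Continuous ep := by unfold ep; fun_prop

lemma cont_curve (z : ℝ × ℝ) : Continuous fun q : ℝ × ℝ => z + q.1 • ed q.2 :=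
  continuous_const.add (continuous_fst.smul (continuous_ed.comp continuous_snd))

lemma sqQ_eq_Icc (L : ℝ) (z : ℝ × ℝ) :
    sqQ L z = Set.Icc ((z.1 - L/2, z.2 - L/2) : ℝ × ℝ) (z.1 + L/2, z.2 + L/2) := by
  rw [sqQ, Icc_prod_Icc]

lemma disc_subset_sqQ (z : ℝ × ℝ) {r : ℝ} (hr : 0 ≤ r) : disc z r ⊆ sqQ (2*r) z := by
  intro p hp
  simp only [disc, mem_setOf_eq] at hp
  have h1 : (p.1 - z.1)^2 < r^2 := by nlinarith [sq_nonneg (p.2 - z.2)]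
  have h2 : (p.2 - z.2)^2 < r^2 := by nlinarith [sq_nonneg (p.1 - z.1)]
  simp only [sqQ, mem_prod, mem_Icc]
  refine ⟨⟨by nlinarith, by nlinarith⟩, ⟨by nlinarith, by nlinarith⟩⟩

lemma measurableSet_disc (z : ℝ × ℝ) (r : ℝ) : MeasurableSet (disc z r) := by
  have : IsOpen (disc z r) := by
    have : Continuous fun p : ℝ × ℝ => (p.1 - z.1)^2 + (p.2 - z.2)^2 := by fun_prop
    exact isOpen_lt this continuous_const
  exact this.measurableSet

lemma integrableOn_of_cont {g : ℝ × ℝ → ℝ} (hg : Continuous g) {s : Set (ℝ × ℝ)}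
    {a b : ℝ × ℝ} (hs : s ⊆ Set.Icc a b) : IntegrableOn g s := by
  exact (hg.continuousOn.integrableOn_compact isCompact_Icc).mono_set hs

lemma polar_disc (g : ℝ × ℝ → ℝ) (hg : Continuous g) (z : ℝ × ℝ) {r : ℝ} (hr : 0 ≤ r) :
    ∫ p in disc z r, g p = ∫ t in (0:ℝ)..r, ∫ θ in (-π)..π, t * g (z + t • ed θ) := by
  have hGc : Continuous fun q : ℝ × ℝ => q.1 * g (z + q.1 • ed q.2) := by
    apply continuous_fst.mul
    exact hg.comp (continuous_const.add (continuous_fst.smul (continuous_ed.comp continuous_snd)))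
  have h1 : ∫ p in disc z r, g p = ∫ p, (disc z r).indicator g p :=
    (integral_indicator (measurableSet_disc z r)).symm
  have h2 : ∀ p : ℝ × ℝ, (disc z r).indicator g (z + p)
      = (disc 0 r).indicator (fun q => g (z + q)) p := by
    intro p
    have hmem : z + p ∈ disc z r ↔ p ∈ disc 0 r := by
      simp [disc]
    by_cases h : p ∈ disc 0 r
    · rw [indicator_of_mem (hmem.2 h), indicator_of_mem h]
    · rw [indicator_of_notMem (fun hc => h (hmem.1 hc)), indicator_of_notMem h]
  have h3 : ∫ p, (disc z r).indicator g p = ∫ p, (disc 0 r).indicator (fun q => g (z + q)) p := by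
    rw [← integral_add_left_eq_self (fun p => (disc z r).indicator g p) z]
    exact integral_congr_ae (Filter.Eventually.of_forall h2)
  have h4 := integral_comp_polarCoord_symm ((disc 0 r).indicator (fun q => g (z + q)))
  have h5 : ∀ p ∈ polarCoord.target,
      p.1 • ((disc 0 r).indicator (fun q => g (z + q)) (polarCoord.symm p))
      = (Ioo (0:ℝ) r ×ˢ Ioo (-π) π).indicator (fun q : ℝ × ℝ => q.1 * g (z + q.1 • ed q.2)) p := by
    rintro ⟨t, θ⟩ ⟨ht, hθ⟩
    simp only [mem_Ioi] at ht
    have hsymm : polarCoord.symm (t, θ) = t • ed θ := by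
      simp [polarCoord_symm_apply, ed, Prod.smul_def, smul_eq_mul]
    have hmem : polarCoord.symm (t, θ) ∈ disc 0 r ↔ t < r := by
      rw [hsymm]
      simp only [disc, mem_setOf_eq, Prod.smul_def, smul_eq_mul, ed, Prod.fst_zero,
        Prod.snd_zero, sub_zero]
      have key : (t * cos θ)^2 + (t * sin θ)^2 = t^2 := by
        linear_combination t^2 * (sin_sq_add_cos_sq θ)
      rw [key]
      constructor
      · intro h; nlinarith
      · intro h; nlinarith
    by_cases h : t < r
    · rw [indicator_of_mem (hmem.2 h), indicator_of_mem (by exact ⟨⟨ht, h⟩, hθ⟩), hsymm]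
      simp [smul_eq_mul]
    · rw [indicator_of_notMem (fun hc => h (hmem.1 hc)), indicator_of_notMem
        (by rintro ⟨⟨_, hc⟩, _⟩; exact h hc)]
      simp
  rw [h1, h3, ← h4, setIntegral_congr_fun polarCoord.open_target.measurableSet h5]
  have hS : MeasurableSet (Ioo (0:ℝ) r ×ˢ Ioo (-π) π) :=
    (measurableSet_Ioo.prod measurableSet_Ioo)
  rw [setIntegral_indicator hS]
  have hinter : polarCoord.target ∩ (Ioo (0:ℝ) r ×ˢ Ioo (-π) π) = Ioo (0:ℝ) r ×ˢ Ioo (-π) π := by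
    apply inter_eq_self_of_subset_right
    rw [polarCoord_target]
    exact prod_mono Ioo_subset_Ioi_self subset_rfl
  rw [hinter]
  have hint : IntegrableOn (fun q : ℝ × ℝ => q.1 * g (z + q.1 • ed q.2))
      (Ioo (0:ℝ) r ×ˢ Ioo (-π) π) := by
    refine integrableOn_of_cont hGc (a := (0, -π)) (b := (r, π)) ?_
    rw [← Icc_prod_Icc]
    exact prod_mono Ioo_subset_Icc_self Ioo_subset_Icc_self
  rw [Measure.volume_eq_prod] at hint ⊢
  rw [setIntegral_prod _ hint]
  rw [intervalIntegral.integral_of_le hr, integral_Ioc_eq_integral_Ioo]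
  have : ∀ t : ℝ, ∫ θ in (-π)..π, t * g (z + t • ed θ)
      = ∫ θ in Ioo (-π) π, t * g (z + t • ed θ) := by
    intro t
    rw [intervalIntegral.integral_of_le (by linarith [pi_pos]), integral_Ioc_eq_integral_Ioo]
  simp_rw [this]

lemma prod_int {G : ℝ × ℝ → ℝ} (hG : Continuous G) {a b c d : ℝ} :
    Integrable G ((volume.restrict (Ioc a b)).prod (volume.restrict (Ioc c d))) := by
  rw [Measure.prod_restrict, ← Measure.volume_eq_prod]
  exact integrableOn_of_cont hG
    (by rw [← Icc_prod_Icc]; exact prod_mono Ioc_subset_Icc_self Ioc_subset_Icc_self)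

lemma swap_II {G : ℝ × ℝ → ℝ} (hG : Continuous G) {a b c d : ℝ} (hab : a ≤ b) (hcd : c ≤ d) :
    ∫ x in a..b, (∫ y in c..d, G (x, y)) = ∫ y in c..d, ∫ x in a..b, G (x, y) := by
  rw [intervalIntegral.integral_of_le hab, intervalIntegral.integral_of_le hcd]
  simp_rw [intervalIntegral.integral_of_le hcd, intervalIntegral.integral_of_le hab]
  exact MeasureTheory.integral_integral_swap (f := fun x y => G (x, y)) (prod_int hG)

lemma marg1 {G : ℝ × ℝ → ℝ} (hG : Continuous G) {a b c d : ℝ} (hab : a ≤ b) (hcd : c ≤ d) :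
    IntervalIntegrable (fun x => ∫ y in c..d, G (x, y)) volume a b := by
  rw [intervalIntegrable_iff, uIoc_of_le hab]
  have h := (prod_int hG (a := a) (b := b) (c := c) (d := d)).integral_prod_left
  simp_rw [intervalIntegral.integral_of_le hcd]
  exact h

section deriv
variable {w : ℝ × ℝ → ℝ}

lemma contdiff_fderiv (hw : ContDiff ℝ 2 w) : ContDiff ℝ 1 (fderiv ℝ w) :=
  hw.fderiv_right (by norm_num)

lemma cont_fderiv (hw : ContDiff ℝ 2 w) : Continuous (fderiv ℝ w) :=
  (contdiff_fderiv hw).continuous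

lemma diff_fderiv (hw : ContDiff ℝ 2 w) : Differentiable ℝ (fderiv ℝ w) :=
  (contdiff_fderiv hw).differentiable one_ne_zero

lemma cont_fderiv2 (hw : ContDiff ℝ 2 w) : Continuous (fderiv ℝ (fderiv ℝ w)) :=
  (contdiff_fderiv hw).continuous_fderiv one_ne_zero

lemma cont_D2 (hw : ContDiff ℝ 2 w) (u v : ℝ × ℝ) : Continuous (fun p => D2 w p u v) :=
  ((cont_fderiv2 hw).clm_apply continuous_const).clm_apply continuous_const

lemma lap_eq_D2 (hw : ContDiff ℝ 2 w) (p : ℝ × ℝ) : lap w p = D2 w p (1,0) (1,0) + D2 w p (0,1) (0,1) := by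
  have hx : pdx (pdx w) p = D2 w p (1,0) (1,0) := by
    unfold pdx
    rw [show (fun q => fderiv ℝ w q (1,0)) = fun q => (fderiv ℝ w q) ((fun _ => ((1:ℝ),(0:ℝ))) q) from rfl]
    rw [fderiv_clm_apply (diff_fderiv hw p) (differentiableAt_const _)]
    simp [D2]
  have hy : pdy (pdy w) p = D2 w p (0,1) (0,1) := by
    unfold pdy
    rw [show (fun q => fderiv ℝ w q (0,1)) = fun q => (fderiv ℝ w q) ((fun _ => ((0:ℝ),(1:ℝ))) q) from rfl]
    rw [fderiv_clm_apply (diff_fderiv hw p) (differentiableAt_const _)]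
    simp [D2]
  rw [lap, hx, hy]

lemma cont_lap (hw : ContDiff ℝ 2 w) : Continuous (lap w) := by
  have : (lap w) = fun p => D2 w p (1,0) (1,0) + D2 w p (0,1) (0,1) :=
    funext (lap_eq_D2 hw)
  rw [this]
  exact (cont_D2 hw _ _).add (cont_D2 hw _ _)

lemma ed_decomp (θ : ℝ) : ed θ = Real.cos θ • ((1:ℝ),(0:ℝ)) + Real.sin θ • ((0:ℝ),(1:ℝ)) := by
  simp [ed, Prod.ext_iff]

lemma ep_decomp (θ : ℝ) : ep θ = (-Real.sin θ) • ((1:ℝ),(0:ℝ)) + Real.cos θ • ((0:ℝ),(1:ℝ)) := by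
  simp [ep, Prod.ext_iff]

lemma lap_rot (hw : ContDiff ℝ 2 w) (p : ℝ × ℝ) (θ : ℝ) :
    D2 w p (ed θ) (ed θ) + D2 w p (ep θ) (ep θ) = lap w p := by
  rw [lap_eq_D2 hw p, ed_decomp θ, ep_decomp θ]
  simp only [D2, map_add, _root_.map_smul, ContinuousLinearMap.add_apply,
    ContinuousLinearMap.smul_apply, ContinuousLinearMap.coe_smul', Pi.smul_apply, smul_eq_mul]
  linear_combination (fderiv ℝ (fderiv ℝ w) p (1,0) (1,0) + fderiv ℝ (fderiv ℝ w) p (0,1) (0,1)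
    + fderiv ℝ (fderiv ℝ w) p (1,0) (0,1) * 0 + fderiv ℝ (fderiv ℝ w) p (0,1) (1,0) * 0) * (sin_sq_add_cos_sq θ)

lemma hasDerivAt_ed (θ : ℝ) : HasDerivAt ed (ep θ) θ := by
  have := (Real.hasDerivAt_cos θ).prodMk (Real.hasDerivAt_sin θ)
  exact this

lemma hasDerivAt_ep (θ : ℝ) : HasDerivAt ep (-ed θ) θ := by
  have h := ((Real.hasDerivAt_sin θ).neg).prodMk (Real.hasDerivAt_cos θ)
  convert h using 1
  · rfl
  · simp [ed]

lemma curve_radial (z : ℝ × ℝ) (θ t : ℝ) :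
    HasDerivAt (fun s : ℝ => z + s • ed θ) (ed θ) t := by
  have h : HasDerivAt (fun s : ℝ => s • ed θ) ((1:ℝ) • ed θ) t :=
    (hasDerivAt_id t).smul_const (ed θ)
  simpa using h.const_add z

lemma curve_angular (z : ℝ × ℝ) (t θ : ℝ) :
    HasDerivAt (fun θ : ℝ => z + t • ed θ) (t • ep θ) θ := by
  exact ((hasDerivAt_ed θ).const_smul t).const_add z

lemma hd_w_radial (hw : ContDiff ℝ 2 w) (z : ℝ × ℝ) (θ t : ℝ) :
    HasDerivAt (fun s => w (z + s • ed θ)) (fderiv ℝ w (z + t • ed θ) (ed θ)) t :=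
  ((hw.differentiable (by norm_num) _).hasFDerivAt).comp_hasDerivAt t (curve_radial z θ t)

lemma hd_Dw_radial (hw : ContDiff ℝ 2 w) (z : ℝ × ℝ) (θ t : ℝ) :
    HasDerivAt (fun s => fderiv ℝ w (z + s • ed θ))
      (fderiv ℝ (fderiv ℝ w) (z + t • ed θ) (ed θ)) t :=
  ((diff_fderiv hw _).hasFDerivAt).comp_hasDerivAt t (curve_radial z θ t)

lemma hd_tDw (hw : ContDiff ℝ 2 w) (z : ℝ × ℝ) (θ t : ℝ) :
    HasDerivAt (fun s => s * fderiv ℝ w (z + s • ed θ) (ed θ))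
      (fderiv ℝ w (z + t • ed θ) (ed θ) + t * D2 w (z + t • ed θ) (ed θ) (ed θ)) t := by
  have hA : HasDerivAt (fun s => fderiv ℝ w (z + s • ed θ) (ed θ))
      (D2 w (z + t • ed θ) (ed θ) (ed θ)) t := by
    have := (hd_Dw_radial hw z θ t).clm_apply (hasDerivAt_const t (ed θ))
    simpa [D2] using this
  have := (hasDerivAt_id t).fun_mul hA
  simpa [add_comm] using this

lemma hd_angular (hw : ContDiff ℝ 2 w) (z : ℝ × ℝ) (t θ : ℝ) :
    HasDerivAt (fun θ => fderiv ℝ w (z + t • ed θ) (ep θ))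
      (t * D2 w (z + t • ed θ) (ep θ) (ep θ) - fderiv ℝ w (z + t • ed θ) (ed θ)) θ := by
  have hA : HasDerivAt (fun θ => fderiv ℝ w (z + t • ed θ))
      (fderiv ℝ (fderiv ℝ w) (z + t • ed θ) (t • ep θ)) θ :=
    ((diff_fderiv hw _).hasFDerivAt).comp_hasDerivAt θ (curve_angular z t θ)
  have := hA.clm_apply (hasDerivAt_ep θ)
  refine this.congr_deriv ?_
  simp only [D2, _root_.map_smul, _root_.map_neg, ContinuousLinearMap.coe_smul',
    ContinuousLinearMap.smul_apply, Pi.smul_apply, smul_eq_mul]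
  ring

end deriv
noncomputable def Psi (w : ℝ × ℝ → ℝ) (z : ℝ × ℝ) (s : ℝ) : ℝ :=
  ∫ θ in (-π)..π, fderiv ℝ w (z + s • ed θ) (ed θ)

section ident
variable {w : ℝ × ℝ → ℝ}

lemma contJ1 (hw : ContDiff ℝ 2 w) (z : ℝ × ℝ) :
    Continuous fun q : ℝ × ℝ => fderiv ℝ w (z + q.1 • ed q.2) (ed q.2) :=
  ((cont_fderiv hw).comp (cont_curve z)).clm_apply (continuous_ed.comp continuous_snd)

lemma contJ2 (hw : ContDiff ℝ 2 w) (z : ℝ × ℝ) :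
    Continuous fun q : ℝ × ℝ => fderiv ℝ w (z + q.1 • ed q.2) (ed q.2)
      + q.1 * D2 w (z + q.1 • ed q.2) (ed q.2) (ed q.2) :=
  (contJ1 hw z).add (continuous_fst.mul ((((cont_fderiv2 hw).comp (cont_curve z)).clm_apply
    (continuous_ed.comp continuous_snd)).clm_apply (continuous_ed.comp continuous_snd)))

lemma psi_integrable (hw : ContDiff ℝ 2 w) (z : ℝ × ℝ) {R : ℝ} (hR : 0 ≤ R) :
    IntervalIntegrable (Psi w z) volume 0 R := by
  have hπ : (-π:ℝ) ≤ π := by linarith [pi_pos]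
  exact marg1 (contJ1 hw z) hR hπ

lemma A1 (hw : ContDiff ℝ 2 w) (z : ℝ × ℝ) {r : ℝ} (hr : 0 ≤ r) :
    ∫ θ in (-π)..π, w (z + r • ed θ) = 2*π*(w z) + ∫ s in (0:ℝ)..r, Psi w z s := by
  have hπ : (-π:ℝ) ≤ π := by linarith [pi_pos]
  have hJ := contJ1 hw z
  have hFTC : ∀ θ : ℝ, ∫ t in (0:ℝ)..r, fderiv ℝ w (z + t • ed θ) (ed θ)
      = w (z + r • ed θ) - w z := by
    intro θ
    have h := intervalIntegral.integral_eq_sub_of_hasDerivAt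
      (f := fun s => w (z + s • ed θ)) (f' := fun t => fderiv ℝ w (z + t • ed θ) (ed θ))
      (fun t _ => hd_w_radial hw z θ t)
      ((hJ.comp (continuous_id.prodMk continuous_const)).intervalIntegrable 0 r)
    simpa using h
  have hswap := swap_II (G := fun q : ℝ × ℝ => fderiv ℝ w (z + q.1 • ed q.2) (ed q.2)) hJ hr hπ
  have hmargθ : IntervalIntegrable
      (fun θ => ∫ t in (0:ℝ)..r, fderiv ℝ w (z + t • ed θ) (ed θ)) volume (-π) π := by
    have := marg1 (G := fun q : ℝ × ℝ => fderiv ℝ w (z + q.2 • ed q.1) (ed q.1))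
      (((cont_fderiv hw).comp (continuous_const.add
        (continuous_snd.smul (continuous_ed.comp continuous_fst)))).clm_apply
        (continuous_ed.comp continuous_fst)) hπ hr
    exact this
  calc ∫ θ in (-π)..π, w (z + r • ed θ)
      = ∫ θ in (-π)..π, (w z + ∫ t in (0:ℝ)..r, fderiv ℝ w (z + t • ed θ) (ed θ)) := by
        apply intervalIntegral.integral_congr
        intro θ _
        have := hFTC θ
        show w (z + r • ed θ) = w z + ∫ t in (0:ℝ)..r, fderiv ℝ w (z + t • ed θ) (ed θ)
        linarith
    _ = (∫ _θ in (-π)..π, w z)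
        + ∫ θ in (-π)..π, ∫ t in (0:ℝ)..r, fderiv ℝ w (z + t • ed θ) (ed θ) := by
        exact intervalIntegral.integral_add (intervalIntegrable_const) hmargθ
    _ = 2*π*(w z) + ∫ s in (0:ℝ)..r, Psi w z s := by
        have hY : (∫ s in (0:ℝ)..r, Psi w z s)
            = ∫ θ in (-π)..π, ∫ t in (0:ℝ)..r, fderiv ℝ w (z + t • ed θ) (ed θ) := hswap
        rw [hY, intervalIntegral.integral_const, smul_eq_mul]
        ring

lemma A2 (hw : ContDiff ℝ 2 w) (z : ℝ × ℝ) {s : ℝ} (hs : 0 ≤ s) :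
    s * Psi w z s = ∫ p in disc z s, lap w p := by
  have hπ : (-π:ℝ) ≤ π := by linarith [pi_pos]
  rw [polar_disc (lap w) (cont_lap hw) z hs]
  have step1 : s * Psi w z s = ∫ θ in (-π)..π, ∫ t in (0:ℝ)..s,
      (fderiv ℝ w (z + t • ed θ) (ed θ) + t * D2 w (z + t • ed θ) (ed θ) (ed θ)) := by
    rw [Psi, ← intervalIntegral.integral_const_mul]
    apply intervalIntegral.integral_congr
    intro θ _
    have h := intervalIntegral.integral_eq_sub_of_hasDerivAt
      (f := fun t => t * fderiv ℝ w (z + t • ed θ) (ed θ))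
      (f' := fun t => fderiv ℝ w (z + t • ed θ) (ed θ) + t * D2 w (z + t • ed θ) (ed θ) (ed θ))
      (fun t _ => hd_tDw hw z θ t)
      (((contJ2 hw z).comp (continuous_id.prodMk continuous_const)).intervalIntegrable 0 s)
    have h2 : ∫ t in (0:ℝ)..s, (fderiv ℝ w (z + t • ed θ) (ed θ)
        + t * D2 w (z + t • ed θ) (ed θ) (ed θ)) = s * fderiv ℝ w (z + s • ed θ) (ed θ) := by
      simpa using h
    show s * fderiv ℝ w (z + s • ed θ) (ed θ) = ∫ t in (0:ℝ)..s,
      (fderiv ℝ w (z + t • ed θ) (ed θ) + t * D2 w (z + t • ed θ) (ed θ) (ed θ))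
    exact h2.symm
  rw [step1, ← swap_II (contJ2 hw z) hs hπ]
  apply intervalIntegral.integral_congr
  intro t _
  have hY : Continuous fun θ : ℝ => t * D2 w (z + t • ed θ) (ep θ) (ep θ)
      - fderiv ℝ w (z + t • ed θ) (ed θ) := by
    have c1 : Continuous fun θ : ℝ => z + t • ed θ :=
      continuous_const.add (continuous_ed.const_smul t)
    exact (continuous_const.mul ((((cont_fderiv2 hw).comp c1).clm_apply continuous_ep).clm_apply
      continuous_ep)).sub (((cont_fderiv hw).comp c1).clm_apply continuous_ed)
  have hX : Continuous fun θ : ℝ => fderiv ℝ w (z + t • ed θ) (ed θ)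
      + t * D2 w (z + t • ed θ) (ed θ) (ed θ) :=
    (contJ2 hw z).comp (continuous_const.prodMk continuous_id)
  have hper : ∫ θ in (-π)..π, (t * D2 w (z + t • ed θ) (ep θ) (ep θ)
      - fderiv ℝ w (z + t • ed θ) (ed θ)) = 0 := by
    have h := intervalIntegral.integral_eq_sub_of_hasDerivAt
      (f := fun θ => fderiv ℝ w (z + t • ed θ) (ep θ))
      (f' := fun θ => t * D2 w (z + t • ed θ) (ep θ) (ep θ) - fderiv ℝ w (z + t • ed θ) (ed θ))
      (a := -π) (b := π) (fun θ _ => hd_angular hw z t θ)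
      (hY.intervalIntegrable (-π) π)
    rw [h]
    have e1 : ed π = ed (-π) := by simp [ed]
    have e2 : ep π = ep (-π) := by simp [ep]
    show fderiv ℝ w (z + t • ed π) (ep π) - fderiv ℝ w (z + t • ed (-π)) (ep (-π)) = 0
    rw [e1, e2, sub_self]
  have hcomb : ∀ θ : ℝ, t * lap w (z + t • ed θ)
      = (fderiv ℝ w (z + t • ed θ) (ed θ) + t * D2 w (z + t • ed θ) (ed θ) (ed θ))
        + (t * D2 w (z + t • ed θ) (ep θ) (ep θ) - fderiv ℝ w (z + t • ed θ) (ed θ)) := by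
    intro θ
    linear_combination (-t) * lap_rot hw (z + t • ed θ) θ
  have hsum : ∫ θ in (-π)..π, t * lap w (z + t • ed θ)
      = (∫ θ in (-π)..π, (fderiv ℝ w (z + t • ed θ) (ed θ)
          + t * D2 w (z + t • ed θ) (ed θ) (ed θ))) + ∫ θ in (-π)..π,
          (t * D2 w (z + t • ed θ) (ep θ) (ep θ) - fderiv ℝ w (z + t • ed θ) (ed θ)) := by
    rw [← intervalIntegral.integral_add (hX.intervalIntegrable (-π) π) (hY.intervalIntegrable (-π) π)]
    apply intervalIntegral.integral_congr
    intro θ _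
    exact hcomb θ
  show (∫ θ in (-π)..π, (fderiv ℝ w (z + t • ed θ) (ed θ)
      + t * D2 w (z + t • ed θ) (ed θ) (ed θ))) = ∫ θ in (-π)..π, t * lap w (z + t • ed θ)
  rw [hsum, hper, add_zero]

end ident
lemma iI_mono {F G : ℝ → ℝ} {a b : ℝ} (hab : a ≤ b) (hF : IntervalIntegrable F volume a b)
    (hG : IntervalIntegrable G volume a b) (h : ∀ s ∈ Ioc a b, F s ≤ G s) :
    ∫ s in a..b, F s ≤ ∫ s in a..b, G s := by
  rw [intervalIntegral.integral_of_le hab, intervalIntegral.integral_of_le hab]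
  exact setIntegral_mono_on ((intervalIntegrable_iff_integrableOn_Ioc_of_le hab).1 hF)
    ((intervalIntegrable_iff_integrableOn_Ioc_of_le hab).1 hG) measurableSet_Ioc h

lemma setIntegral_union_le {g : ℝ × ℝ → ℝ} (hg0 : ∀ p, 0 ≤ g p) {A B : Set (ℝ × ℝ)}
    (hA : MeasurableSet A) (hB : MeasurableSet B)
    (hgA : IntegrableOn g A) (hgB : IntegrableOn g B) :
    ∫ p in A ∪ B, g p ≤ (∫ p in A, g p) + ∫ p in B, g p := by
  rw [← integral_indicator (hA.union hB), ← integral_indicator hA, ← integral_indicator hB,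
    ← integral_add (hgA.integrable_indicator hA) (hgB.integrable_indicator hB)]
  apply integral_mono ((hgA.union hgB).integrable_indicator (hA.union hB))
    ((hgA.integrable_indicator hA).add (hgB.integrable_indicator hB))
  intro p
  by_cases hpA : p ∈ A <;> by_cases hpB : p ∈ B <;>
    simp [Set.indicator_of_mem, Set.indicator_of_notMem, hpA, hpB, hg0 p, mem_union]

lemma measurableSet_sqQ (L : ℝ) (z : ℝ × ℝ) : MeasurableSet (sqQ L z) := by
  rw [sqQ_eq_Icc]; exact measurableSet_Icc

lemma sqQ_mono {r r' : ℝ} (h : r ≤ r') (z : ℝ × ℝ) : sqQ r z ⊆ sqQ r' z := by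
  rw [sqQ_eq_Icc, sqQ_eq_Icc]
  apply Icc_subset_Icc <;> constructor <;> simp <;> linarith

lemma sq_double {g : ℝ × ℝ → ℝ} (hgc : Continuous g) (hg0 : ∀ p, 0 ≤ g p) {L M : ℝ}
    (hL : 0 ≤ L) (hM : ∀ c : ℝ × ℝ, ∫ p in sqQ L c, g p ≤ M) (z : ℝ × ℝ) :
    ∫ p in sqQ (2*L) z, g p ≤ 4*M := by
  have hint : ∀ c : ℝ × ℝ, IntegrableOn g (sqQ L c) := fun c =>
    integrableOn_of_cont hgc (sqQ_eq_Icc L c).subset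
  have hsub : sqQ (2*L) z ⊆ (sqQ L (z.1 - L/2, z.2 - L/2) ∪ sqQ L (z.1 + L/2, z.2 - L/2)) ∪
      (sqQ L (z.1 - L/2, z.2 + L/2) ∪ sqQ L (z.1 + L/2, z.2 + L/2)) := by
    intro p hp
    simp only [sqQ, mem_prod, mem_Icc] at hp
    obtain ⟨⟨h1, h2⟩, h3, h4⟩ := hp
    rcases le_total p.1 z.1 with hx | hx <;> rcases le_total p.2 z.2 with hy | hy
    · refine Or.inl (Or.inl ?_)
      simp only [sqQ, mem_prod, mem_Icc]
      exact ⟨⟨by linarith, by linarith⟩, by linarith, by linarith⟩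
    · refine Or.inr (Or.inl ?_)
      simp only [sqQ, mem_prod, mem_Icc]
      exact ⟨⟨by linarith, by linarith⟩, by linarith, by linarith⟩
    · refine Or.inl (Or.inr ?_)
      simp only [sqQ, mem_prod, mem_Icc]
      exact ⟨⟨by linarith, by linarith⟩, by linarith, by linarith⟩
    · refine Or.inr (Or.inr ?_)
      simp only [sqQ, mem_prod, mem_Icc]
      exact ⟨⟨by linarith, by linarith⟩, by linarith, by linarith⟩
  have hmono : ∫ p in sqQ (2*L) z, g p ≤ ∫ p in (sqQ L (z.1 - L/2, z.2 - L/2) ∪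
      sqQ L (z.1 + L/2, z.2 - L/2)) ∪ (sqQ L (z.1 - L/2, z.2 + L/2) ∪
      sqQ L (z.1 + L/2, z.2 + L/2)), g p := by
    apply setIntegral_mono_set
    · exact (((hint _).union (hint _)).union ((hint _).union (hint _)))
    · exact Filter.Eventually.of_forall fun p => hg0 p
    · exact HasSubset.Subset.eventuallyLE hsub
  have h2 : ∫ p in sqQ L (z.1 - L/2, z.2 - L/2) ∪ sqQ L (z.1 + L/2, z.2 - L/2), g p
      ≤ (∫ p in sqQ L (z.1 - L/2, z.2 - L/2), g p)
        + ∫ p in sqQ L (z.1 + L/2, z.2 - L/2), g p :=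
    setIntegral_union_le hg0 (measurableSet_sqQ _ _) (measurableSet_sqQ _ _) (hint _) (hint _)
  have h3 : ∫ p in sqQ L (z.1 - L/2, z.2 + L/2) ∪ sqQ L (z.1 + L/2, z.2 + L/2), g p
      ≤ (∫ p in sqQ L (z.1 - L/2, z.2 + L/2), g p)
        + ∫ p in sqQ L (z.1 + L/2, z.2 + L/2), g p :=
    setIntegral_union_le hg0 (measurableSet_sqQ _ _) (measurableSet_sqQ _ _) (hint _) (hint _)
  have h1 : ∫ p in (sqQ L (z.1 - L/2, z.2 - L/2) ∪ sqQ L (z.1 + L/2, z.2 - L/2)) ∪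
      (sqQ L (z.1 - L/2, z.2 + L/2) ∪ sqQ L (z.1 + L/2, z.2 + L/2)), g p
      ≤ (∫ p in sqQ L (z.1 - L/2, z.2 - L/2) ∪ sqQ L (z.1 + L/2, z.2 - L/2), g p)
        + ∫ p in sqQ L (z.1 - L/2, z.2 + L/2) ∪ sqQ L (z.1 + L/2, z.2 + L/2), g p :=
    setIntegral_union_le hg0 ((measurableSet_sqQ _ _).union (measurableSet_sqQ _ _))
      ((measurableSet_sqQ _ _).union (measurableSet_sqQ _ _))
      ((hint _).union (hint _)) ((hint _).union (hint _))
  have hM1 := hM (z.1 - L/2, z.2 - L/2)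
  have hM2 := hM (z.1 + L/2, z.2 - L/2)
  have hM3 := hM (z.1 - L/2, z.2 + L/2)
  have hM4 := hM (z.1 + L/2, z.2 + L/2)
  linarith [hmono]

lemma disc_area (z : ℝ × ℝ) {s : ℝ} (hs : 0 ≤ s) : ∫ _p in disc z s, (1:ℝ) = π * s^2 := by
  rw [polar_disc (fun _ => (1:ℝ)) continuous_const z hs]
  have : ∀ t : ℝ, ∫ _θ in (-π)..π, t * (1:ℝ) = (2*π) * t := by
    intro t
    rw [intervalIntegral.integral_const, smul_eq_mul]
    ring
  simp_rw [this]
  rw [intervalIntegral.integral_const_mul, integral_id]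
  ring
lemma key_disc_bounds {w : ℝ × ℝ → ℝ} (hw : ContDiff ℝ 2 w) (z : ℝ × ℝ) {R Eb : ℝ}
    (hR : 0 < R) (hE : ∀ r : ℝ, 0 ≤ r → r ≤ R → |∫ s in (0:ℝ)..r, Psi w z s| ≤ Eb) :
    π*R^2*(w z) - Eb*R^2/2 ≤ (∫ p in disc z R, w p) ∧
      (∫ p in disc z R, w p) ≤ π*R^2*(w z) + Eb*R^2/2 := by
  have hπ : (-π:ℝ) ≤ π := by linarith [pi_pos]
  have hwc := hw.continuous
  have hpd := polar_disc w hwc z hR.le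
  have hΘc : Continuous fun q : ℝ × ℝ => q.1 * w (z + q.1 • ed q.2) :=
    continuous_fst.mul (hwc.comp (cont_curve z))
  have hΘint : IntervalIntegrable (fun t => ∫ θ in (-π)..π, t * w (z + t • ed θ)) volume 0 R :=
    marg1 hΘc hR.le hπ
  have hid : ∀ t : ℝ, 0 ≤ t → (∫ θ in (-π)..π, t * w (z + t • ed θ))
      = 2*π*(w z)*t + t * ∫ s in (0:ℝ)..t, Psi w z s := by
    intro t ht
    rw [intervalIntegral.integral_const_mul, A1 hw z ht]
    ring
  have hup : ∀ t ∈ Ioc (0:ℝ) R, (∫ θ in (-π)..π, t * w (z + t • ed θ)) ≤ 2*π*(w z)*t + Eb*t := by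
    intro t ht
    rw [hid t ht.1.le]
    have h2 := abs_le.1 (hE t ht.1.le ht.2)
    nlinarith [ht.1]
  have hlo : ∀ t ∈ Ioc (0:ℝ) R, 2*π*(w z)*t - Eb*t ≤ ∫ θ in (-π)..π, t * w (z + t • ed θ) := by
    intro t ht
    rw [hid t ht.1.le]
    have h2 := abs_le.1 (hE t ht.1.le ht.2)
    nlinarith [ht.1]
  have hcont_up : Continuous fun t : ℝ => 2*π*(w z)*t + Eb*t := by fun_prop
  have hcont_lo : Continuous fun t : ℝ => 2*π*(w z)*t - Eb*t := by fun_prop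
  have hintup : ∫ t in (0:ℝ)..R, (2*π*(w z)*t + Eb*t) = π*R^2*(w z) + Eb*R^2/2 := by
    have : ∀ t : ℝ, 2*π*(w z)*t + Eb*t = (2*π*(w z) + Eb) * t := fun t => by ring
    simp_rw [this]
    rw [intervalIntegral.integral_const_mul, integral_id]
    ring
  have hintlo : ∫ t in (0:ℝ)..R, (2*π*(w z)*t - Eb*t) = π*R^2*(w z) - Eb*R^2/2 := by
    have : ∀ t : ℝ, 2*π*(w z)*t - Eb*t = (2*π*(w z) - Eb) * t := fun t => by ring
    simp_rw [this]
    rw [intervalIntegral.integral_const_mul, integral_id]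
    ring
  constructor
  · rw [hpd, ← hintlo]
    exact iI_mono hR.le (hcont_lo.intervalIntegrable 0 R) hΘint hlo
  · rw [hpd, ← hintup]
    exact iI_mono hR.le hΘint (hcont_up.intervalIntegrable 0 R) hup
lemma psi_multiscale {w f : ℝ × ℝ → ℝ} (hw : ContDiff ℝ 2 w) (hf : ∀ p, lap w p = f p)
    (hf1 : ∀ p, |f p| ≤ 1) {N : ℕ} (hN3 : 3 ≤ N) {σ : ℝ} (hσl : 2 / (N:ℝ)^2 < σ)
    (hσ0 : 0 < σ) {k : ℕ}
    (hfint : ∀ x : ℝ × ℝ, ∀ i : ℕ, i ≤ k →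
      (1 / (N : ℝ) ^ (2 * i)) * ∫ p in sqQ ((N : ℝ) ^ i) x, |f p| ≤ σ ^ i) (z : ℝ × ℝ) :
    ∀ i : ℕ, i ≤ k →
      ∫ s in (0:ℝ)..2*(N:ℝ)^i, |Psi w z s| ≤ 8 + 32 * ((N:ℝ)^2*σ)^i * Real.log N := by
  have hπ := pi_pos
  have hN1 : (1:ℝ) ≤ (N:ℝ) := by
    have : (3:ℝ) ≤ (N:ℝ) := by exact_mod_cast hN3
    linarith
  have hN0 : (0:ℝ) < (N:ℝ) := by linarith
  have hfc : Continuous f := by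
    have h := cont_lap hw
    have : lap w = f := funext hf
    rwa [this] at h
  have habs : Continuous fun p => |f p| := hfc.abs
  have habs0 : ∀ p : ℝ × ℝ, 0 ≤ |f p| := fun p => abs_nonneg _
  have hlog0 : 0 ≤ Real.log (N:ℝ) := Real.log_nonneg hN1
  -- integral of |f| over any square of side N^i
  have hsq : ∀ i : ℕ, i ≤ k → ∀ c : ℝ × ℝ,
      ∫ p in sqQ ((N:ℝ)^i) c, |f p| ≤ (N:ℝ)^(2*i) * σ^i := by
    intro i hi c
    have hpos : (0:ℝ) < (N:ℝ)^(2*i) := pow_pos hN0 _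
    have h := hfint c i hi
    calc ∫ p in sqQ ((N:ℝ)^i) c, |f p|
        = (N:ℝ)^(2*i) * ((1 / (N : ℝ) ^ (2 * i)) * ∫ p in sqQ ((N : ℝ) ^ i) c, |f p|) := by
          field_simp
      _ ≤ (N:ℝ)^(2*i) * σ^i := by
          exact mul_le_mul_of_nonneg_left h hpos.le
  have hsq16 : ∀ i : ℕ, i ≤ k → ∀ c : ℝ × ℝ,
      ∫ p in sqQ (4*(N:ℝ)^i) c, |f p| ≤ 16 * ((N:ℝ)^(2*i) * σ^i) := by
    intro i hi c
    have hL : (0:ℝ) ≤ (N:ℝ)^i := (pow_pos hN0 i).le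
    have h4 := sq_double habs habs0 hL (hsq i hi) 
    have h16 := sq_double habs habs0 (by linarith : (0:ℝ) ≤ 2*(N:ℝ)^i) h4 c
    have he : (4:ℝ)*(N:ℝ)^i = 2*(2*(N:ℝ)^i) := by ring
    rw [he]
    calc ∫ p in sqQ (2*(2*(N:ℝ)^i)) c, |f p| ≤ 4*(4*((N:ℝ)^(2*i) * σ^i)) := h16
      _ = 16 * ((N:ℝ)^(2*i) * σ^i) := by ring
  -- pointwise bounds on |Psi|
  have hdiscInt : ∀ s : ℝ, 0 ≤ s → IntegrableOn (fun p => |f p|) (disc z s) :=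
    fun s hs => integrableOn_of_cont habs
      ((disc_subset_sqQ z hs).trans (sqQ_eq_Icc _ _).subset)
  have hsPsi : ∀ s : ℝ, 0 ≤ s → |s * Psi w z s| ≤ ∫ p in disc z s, |f p| := by
    intro s hs
    rw [A2 hw z hs]
    have h1 : ∫ p in disc z s, lap w p = ∫ p in disc z s, f p :=
      setIntegral_congr_fun (measurableSet_disc z s) (fun p _ => hf p)
    rw [h1]
    have h2 := norm_integral_le_integral_norm (μ := volume.restrict (disc z s)) f
    simpa [Real.norm_eq_abs] using h2
  have hF0 : ∀ s : ℝ, 0 < s → |Psi w z s| ≤ π * s := by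
    intro s hs
    have h1 : ∫ p in disc z s, |f p| ≤ ∫ _p in disc z s, (1:ℝ) := by
      apply setIntegral_mono_on (hdiscInt s hs.le)
        (integrableOn_of_cont continuous_const
          ((disc_subset_sqQ z hs.le).trans (sqQ_eq_Icc _ _).subset))
        (measurableSet_disc z s)
      exact fun p _ => hf1 p
    have h2 := (hsPsi s hs.le).trans (h1.trans_eq (disc_area z hs.le))
    rw [abs_mul, abs_of_pos hs] at h2
    have h3 : s * |Psi w z s| ≤ s * (π * s) := by nlinarith [h2]
    exact le_of_mul_le_mul_left h3 hs
  have hFb : ∀ i : ℕ, i ≤ k → ∀ s : ℝ, 0 < s → s ≤ 2*(N:ℝ)^i →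
      |Psi w z s| ≤ 16 * ((N:ℝ)^(2*i) * σ^i) / s := by
    intro i hi s hs hsle
    have hsub : disc z s ⊆ sqQ (4*(N:ℝ)^i) z :=
      (disc_subset_sqQ z hs.le).trans (sqQ_mono (by linarith) z)
    have h1 : ∫ p in disc z s, |f p| ≤ ∫ p in sqQ (4*(N:ℝ)^i) z, |f p| := by
      apply setIntegral_mono_set (integrableOn_of_cont habs (sqQ_eq_Icc _ _).subset)
        (Filter.Eventually.of_forall habs0) (HasSubset.Subset.eventuallyLE hsub)
    have h2 := (hsPsi s hs.le).trans (h1.trans (hsq16 i hi z))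
    rw [abs_mul, abs_of_pos hs] at h2
    rw [le_div_iff₀ hs]
    linarith [h2]
  -- induction
  intro i
  induction i with
  | zero =>
    intro _
    have h2 : (2:ℝ)*(N:ℝ)^0 = 2 := by norm_num
    rw [h2]
    have hint1 : IntervalIntegrable (fun s => |Psi w z s|) volume 0 2 :=
      (psi_integrable hw z (by norm_num : (0:ℝ) ≤ 2)).abs
    have hmon := iI_mono (G := fun s => π * s) (by norm_num : (0:ℝ) ≤ 2) hint1
      ((by fun_prop : Continuous fun s : ℝ => π * s).intervalIntegrable 0 2)
      (fun s hs => hF0 s hs.1)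
    have hval : ∫ s in (0:ℝ)..2, π * s = 2*π := by
      rw [intervalIntegral.integral_const_mul, integral_id]
      norm_num
      ring
    rw [hval] at hmon
    have : (2:ℝ)*π ≤ 8 := by nlinarith [pi_lt_d2]
    simp only [pow_zero, mul_one]
    nlinarith [mul_nonneg (by norm_num : (0:ℝ) ≤ 32) hlog0]
  | succ n ihn =>
    intro hnk
    have hn : n ≤ k := le_trans (Nat.le_succ n) hnk
    have ih := ihn hn
    have hNn : (0:ℝ) < (N:ℝ)^n := pow_pos hN0 n
    have hNn1 : (0:ℝ) < (N:ℝ)^(n+1) := pow_pos hN0 _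
    have hle : 2*(N:ℝ)^n ≤ 2*(N:ℝ)^(n+1) := by
      rw [pow_succ]
      nlinarith [hNn, hN1]
    have hIa : IntervalIntegrable (fun s => |Psi w z s|) volume 0 (2*(N:ℝ)^n) :=
      (psi_integrable hw z (by positivity)).abs
    have hIb : IntervalIntegrable (fun s => |Psi w z s|) volume (2*(N:ℝ)^n) (2*(N:ℝ)^(n+1)) := by
      apply ((psi_integrable hw z (by positivity : (0:ℝ) ≤ 2*(N:ℝ)^(n+1))).abs).mono_set
      apply uIcc_subset_uIcc
      · rw [mem_uIcc]; left; exact ⟨by positivity, by linarith⟩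
      · rw [mem_uIcc]; left; exact ⟨by linarith, le_rfl⟩
    have hsplit := intervalIntegral.integral_add_adjacent_intervals hIa hIb
    -- bound on the outer piece
    have hM : (0:ℝ) ≤ 16 * ((N:ℝ)^(2*(n+1)) * σ^(n+1)) := by positivity
    have hpiece : ∫ s in (2*(N:ℝ)^n)..(2*(N:ℝ)^(n+1)), |Psi w z s|
        ≤ 16 * ((N:ℝ)^(2*(n+1)) * σ^(n+1)) * Real.log N := by
      have hco : ContinuousOn (fun s : ℝ => 16 * ((N:ℝ)^(2*(n+1)) * σ^(n+1)) * (1/s))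
          (uIcc (2*(N:ℝ)^n) (2*(N:ℝ)^(n+1))) := by
        apply ContinuousOn.mul continuousOn_const
        apply ContinuousOn.div continuousOn_const continuousOn_id
        intro x hx
        rw [uIcc_of_le hle] at hx
        have hx0 : (0:ℝ) < x := lt_of_lt_of_le (by positivity) hx.1
        exact ne_of_gt hx0
      have hmon := iI_mono hle hIb hco.intervalIntegrable ?_
      · have hval : ∫ s in (2*(N:ℝ)^n)..(2*(N:ℝ)^(n+1)),
            16 * ((N:ℝ)^(2*(n+1)) * σ^(n+1)) * (1/s)
            = 16 * ((N:ℝ)^(2*(n+1)) * σ^(n+1)) * Real.log N := by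
          rw [intervalIntegral.integral_const_mul, integral_one_div]
          · congr 1
            rw [show (2*(N:ℝ)^(n+1))/(2*(N:ℝ)^n) = (N:ℝ) by
              rw [pow_succ]; field_simp]
          · rw [uIcc_of_le hle]
            intro hc
            have := hc.1
            nlinarith
        rw [hval] at hmon
        exact hmon
      · intro s hs
        have h := hFb (n+1) hnk s (lt_of_le_of_lt (by positivity) hs.1) hs.2
        rw [div_eq_mul_one_div] at h
        exact h
    rw [← hsplit]
    -- final arithmetic
    have ha2 : (2:ℝ) < (N:ℝ)^2*σ := by
      have hN2 : (0:ℝ) < (N:ℝ)^2 := by positivity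
      rw [div_lt_iff₀ hN2] at hσl
      linarith [hσl]
    have hpa : (0:ℝ) < (N:ℝ)^2*σ := by linarith
    have hconv : (N:ℝ)^(2*(n+1)) * σ^(n+1) = ((N:ℝ)^2*σ)^(n+1) := by
      rw [mul_pow, ← pow_mul]
    have hconv2 : (N:ℝ)^(2*n) * σ^n = ((N:ℝ)^2*σ)^n := by
      rw [mul_pow, ← pow_mul]
    rw [hconv] at hpiece
    have h2a : 2 * ((N:ℝ)^2*σ)^n ≤ ((N:ℝ)^2*σ)^(n+1) := by
      have hps : ((N:ℝ)^2*σ)^(n+1) = ((N:ℝ)^2*σ)^n * ((N:ℝ)^2*σ) := pow_succ _ n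
      rw [hps]
      nlinarith [pow_pos hpa n]
    have hmm := mul_le_mul_of_nonneg_right h2a hlog0
    nlinarith [ih, hpiece]
lemma disc_sub_disc {x y : ℝ × ℝ} {R : ℝ} (hR : 0 < R) (hy : y ∈ sqQ R x) :
    disc y R ⊆ disc x (2*R) := by
  intro p hp
  simp only [disc, mem_setOf_eq] at hp ⊢
  simp only [sqQ, mem_prod, mem_Icc] at hy
  obtain ⟨⟨hy1l, hy1u⟩, hy2l, hy2u⟩ := hy
  have hc1 : (y.1 - x.1)^2 ≤ (R/2)^2 := by nlinarith
  have hc2 : (y.2 - x.2)^2 ≤ (R/2)^2 := by nlinarith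
  nlinarith [hp, hc1, hc2, sq_nonneg ((p.1 - y.1) - (y.1 - x.1)),
    sq_nonneg ((p.2 - y.2) - (y.2 - x.2)), sq_nonneg R]

lemma combine_est {a b I1 I2 Eb R : ℝ} (hR : 0 < R) (hEb0 : 0 ≤ Eb)
    (h1 : π*R^2*a - Eb*R^2/2 ≤ I1) (hm : I1 ≤ I2)
    (h3 : I2 ≤ π*(2*R)^2*b + Eb*(2*R)^2/2) : a ≤ 4*b + Eb := by
  have hπ := Real.pi_gt_three
  have hR2 : (0:ℝ) < R^2 := by positivity
  have hq : π * R^2 * a ≤ π * R^2 * (4*b + Eb) := by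
    nlinarith [mul_nonneg (mul_nonneg (by linarith : (0:ℝ) ≤ π - 5/2) hEb0) hR2.le]
  have hpr : (0:ℝ) < π * R^2 := by positivity
  exact le_of_mul_le_mul_left hq hpr

theorem stmt11 :
    ∃ C : ℝ, 0 < C ∧ ∀ (N : ℕ), Odd N → 3 ≤ N → ∀ σ : ℝ,
      2 / (N : ℝ) ^ 2 < σ → σ < 1 → ∀ (k : ℕ) (w f : ℝ × ℝ → ℝ),
      ContDiff ℝ 2 w → (∀ p, 0 ≤ w p) → (∀ p, lap w p = f p) →
      (∀ p, |f p| ≤ 1) →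
      (∀ x : ℝ × ℝ, ∀ i : ℕ, i ≤ k →
        (1 / (N : ℝ) ^ (2 * i)) * ∫ y in sqQ ((N : ℝ) ^ i) x, |f y| ≤ σ ^ i) →
      ∀ x y : ℝ × ℝ, y ∈ sqQ ((N : ℝ) ^ k) x →
        w y ≤ C * (w x + (N : ℝ) ^ (2 * k) * σ ^ k * Real.log N) := by
  refine ⟨100, by norm_num, ?_⟩
  intro N _hodd hN3 σ hσl hσu k w f hw hw0 hf hf1 hfint x y hy
  have hN3r : (3:ℝ) ≤ (N:ℝ) := by exact_mod_cast hN3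
  have hN1 : (1:ℝ) ≤ (N:ℝ) := by linarith
  have hN0 : (0:ℝ) < (N:ℝ) := by linarith
  have hσ0 : 0 < σ := lt_trans (by positivity) hσl
  set R : ℝ := (N:ℝ)^k with hRdef
  have hR : 0 < R := pow_pos hN0 k
  set A : ℝ := (N:ℝ)^2*σ with hAdef
  have ha2 : (2:ℝ) < A := by
    have hN2 : (0:ℝ) < (N:ℝ)^2 := by positivity
    rw [div_lt_iff₀ hN2] at hσl
    rw [hAdef]; linarith [hσl]
  have hpa : (0:ℝ) < A := by linarith
  have hlog1 : 1 ≤ Real.log (N:ℝ) := by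
    rw [Real.le_log_iff_exp_le hN0]
    calc Real.exp 1 ≤ 2.7182818286 := Real.exp_one_lt_d9.le
      _ ≤ (N:ℝ) := by linarith
  have hlog0 : 0 ≤ Real.log (N:ℝ) := by linarith
  have hak1 : (1:ℝ) ≤ A^k := by
    calc (1:ℝ) = 1^k := (one_pow k).symm
      _ ≤ A^k := pow_le_pow_left₀ zero_le_one (by linarith) k
  have hX1 : 1 ≤ A^k * Real.log (N:ℝ) := by
    calc (1:ℝ) = 1 * 1 := by norm_num
      _ ≤ A^k * Real.log (N:ℝ) := mul_le_mul hak1 hlog1 (by norm_num) (by linarith)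
  set Eb : ℝ := 8 + 32 * A^k * Real.log (N:ℝ) with hEbdef
  have hEb0 : 0 ≤ Eb := by rw [hEbdef]; nlinarith
  have hEb40 : Eb ≤ 40 * (A^k * Real.log (N:ℝ)) := by rw [hEbdef]; nlinarith
  -- the multiscale bound at top scale, any center
  have hms : ∀ z : ℝ × ℝ, ∫ s in (0:ℝ)..2*R, |Psi w z s| ≤ Eb := by
    intro z
    have h := psi_multiscale hw hf hf1 hN3 hσl hσ0 hfint z k le_rfl
    exact h
  have hE : ∀ z : ℝ × ℝ, ∀ r : ℝ, 0 ≤ r → r ≤ 2*R → |∫ s in (0:ℝ)..r, Psi w z s| ≤ Eb := by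
    intro z r hr0 hr2
    have h1 : |∫ s in (0:ℝ)..r, Psi w z s| ≤ ∫ s in (0:ℝ)..r, |Psi w z s| := by
      have := intervalIntegral.norm_integral_le_integral_norm (f := Psi w z)
        (a := 0) (b := r) (μ := volume) hr0
      simpa [Real.norm_eq_abs] using this
    have hI1 : IntervalIntegrable (fun s => |Psi w z s|) volume 0 r :=
      (psi_integrable hw z hr0).abs
    have hI2 : IntervalIntegrable (fun s => |Psi w z s|) volume r (2*R) := by
      apply ((psi_integrable hw z (by positivity : (0:ℝ) ≤ 2*R)).abs).mono_set
      apply uIcc_subset_uIcc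
      · rw [mem_uIcc]; left; exact ⟨hr0, hr2⟩
      · rw [mem_uIcc]; left; exact ⟨by positivity, le_rfl⟩
    have hsplit := intervalIntegral.integral_add_adjacent_intervals hI1 hI2
    have hnn : 0 ≤ ∫ s in r..(2*R), |Psi w z s| :=
      intervalIntegral.integral_nonneg hr2 (fun s _ => abs_nonneg _)
    have h2 : ∫ s in (0:ℝ)..r, |Psi w z s| ≤ ∫ s in (0:ℝ)..2*R, |Psi w z s| := by
      rw [← hsplit]; linarith
    exact h1.trans (h2.trans (hms z))
  -- disc bounds at y (radius R) and x (radius 2R)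
  have hky := key_disc_bounds hw y hR (fun r h0 hr => hE y r h0 (by linarith))
  have hkx := key_disc_bounds hw x (by linarith : (0:ℝ) < 2*R) (hE x)
  have hsub : disc y R ⊆ disc x (2*R) := disc_sub_disc hR hy
  have hmono : ∫ p in disc y R, w p ≤ ∫ p in disc x (2*R), w p := by
    apply setIntegral_mono_set
      (integrableOn_of_cont hw.continuous
        ((disc_subset_sqQ x (by linarith)).trans (sqQ_eq_Icc _ _).subset))
      (Filter.Eventually.of_forall fun p => hw0 p)
      (HasSubset.Subset.eventuallyLE hsub)
  -- combine
  have hwy : w y ≤ 4 * w x + Eb := combine_est hR hEb0 hky.1 hmono hkx.2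
  have hconv : (N:ℝ)^(2*k) * σ^k = A^k := by
    rw [hAdef, mul_pow, ← pow_mul]
  rw [hconv]
  have hwx0 := hw0 x
  calc w y ≤ 4 * w x + Eb := hwy
    _ ≤ 4 * w x + 40 * (A^k * Real.log (N:ℝ)) := by linarith
    _ ≤ 100 * (w x + A^k * Real.log (N:ℝ)) := by linarith
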